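/- Let C ≥ 1 be an integer, U > 0, B ≥ 0, δ ≥ 0, ζ' ≥ 0, η' ≥ 0 real numbers, and for each c ∈ {1, …, C} let Z^c ≥ 0 and P^c_max ≥ 0 be reals; set γ' = √(Σ_{c=1}^{C} P^c_max). Let finite index sets be given so that H', Ĥ' are K×N complex matrices and D', D̂' are K×K complex matrices, and let V'* and V'^opt be N×K block-diagonal complex matrices with diagonal blocks V^{c,*} and V^{c,opt} (of sizes N^c×K^c with Σ_c N^c = N, Σ_c K^c = K) satisfying ‖V^{c,*}‖_F² ≤ P^c_max and ‖V^{c,opt}‖_F² ≤ P^c_max for all c. Define φ'(H, V, D) = U‖HV − D‖_F² + Σ_{c=1}^{C} Z^c·‖V^c‖_F² for block-diagonal V with blocks V^c. Assume ‖H'‖_F ≤ B, ‖H' − Ĥ'‖_F ≤ Bδ, ‖D'‖_F ≤ ζ'B, ‖D̂'‖_F ≤ ζ'B(1+δ), ‖D' − D̂'‖_F ≤ η'Bδ, and φ'(Ĥ', V'*, D̂') ≤ φ'(Ĥ', V'^opt, D̂'). Then φ'(H', V'*, D') − φ'(H', V'^opt, D') ≤ U·φ̄', where φ̄' = 2·[(2+δ)(γ'²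 + ζ'η') + 2(ζ'(1+δ) + η')·γ']·B²·δ. -/
import Mathlib


open Matrix

/-- Frobenius norm of a complex matrix. -/
noncomputable def frobNorm {m n : Type*} [Fintype m] [Fintype n]
    (A : Matrix m n ℂ) : ℝ :=
  Real.sqrt (∑ i, ∑ j, ‖A i j‖ ^ 2)

/-- The multi-cell objective φ'(H, V, D) = U‖H·blkdiag{V¹,…,V^C} − D‖_F²
+ Σ_c Z^c‖V^c‖_F², for a block-diagonal precoder with blocks V^c. -/
noncomputable def phi' {C : ℕ} {Kc Nc : Fin C → ℕ} (U : ℝ) (Z : Fin C → ℝ)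
    (H : Matrix (Σ c, Fin (Kc c)) (Σ c, Fin (Nc c)) ℂ)
    (Vb : ∀ c, Matrix (Fin (Nc c)) (Fin (Kc c)) ℂ)
    (D : Matrix (Σ c, Fin (Kc c)) (Σ c, Fin (Kc c)) ℂ) : ℝ :=
  U * frobNorm (H * Matrix.blockDiagonal' Vb - D) ^ 2 +
    ∑ c, Z c * frobNorm (Vb c) ^ 2

namespace Lemma9Aux

noncomputable def emb {m n : Type*} [Fintype m] [Fintype n] (A : Matrix m n ℂ) :
    EuclideanSpace ℂ (m × n) := (WithLp.equiv 2 _).symm fun p => A p.1 p.2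

lemma frobNorm_eq {m n : Type*} [Fintype m] [Fintype n] (A : Matrix m n ℂ) :
    frobNorm A = ‖emb A‖ := by
  rw [EuclideanSpace.norm_eq, frobNorm, Fintype.sum_prod_type]
  rfl

lemma emb_sub {m n : Type*} [Fintype m] [Fintype n] (A B : Matrix m n ℂ) :
    emb (A - B) = emb A - emb B := rfl

lemma frobNorm_nonneg {m n : Type*} [Fintype m] [Fintype n] (A : Matrix m n ℂ) :
    0 ≤ frobNorm A := Real.sqrt_nonneg _

lemma frobNorm_sq {m n : Type*} [Fintype m] [Fintype n] (A : Matrix m n ℂ) :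
    frobNorm A ^ 2 = ∑ i, ∑ j, ‖A i j‖ ^ 2 :=
  Real.sq_sqrt (by positivity)

lemma frobNorm_mul_le {m n p : Type*} [Fintype m] [Fintype n] [Fintype p]
    (A : Matrix m n ℂ) (B : Matrix n p ℂ) :
    frobNorm (A * B) ≤ frobNorm A * frobNorm B := by
  have hsq : frobNorm (A * B) ^ 2 ≤ (frobNorm A * frobNorm B) ^ 2 := by
    rw [frobNorm_sq, mul_pow, frobNorm_sq, frobNorm_sq]
    calc ∑ i, ∑ j, ‖(A * B) i j‖ ^ 2
        ≤ ∑ i, ∑ j, (∑ k, ‖A i k‖ ^ 2) * (∑ k, ‖B k j‖ ^ 2) := by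
          refine Finset.sum_le_sum fun i _ => Finset.sum_le_sum fun j _ => ?_
          have h1 : ‖(A * B) i j‖ ≤ ∑ k, ‖A i k‖ * ‖B k j‖ := by
            rw [Matrix.mul_apply]
            exact (norm_sum_le _ _).trans (le_of_eq (by simp [norm_mul]))
          calc ‖(A * B) i j‖ ^ 2 ≤ (∑ k, ‖A i k‖ * ‖B k j‖) ^ 2 := by
                have := norm_nonneg ((A * B) i j)
                nlinarith [Finset.sum_nonneg (fun k (_ : k ∈ Finset.univ) =>
                  mul_nonneg (norm_nonneg (A i k)) (norm_nonneg (B k j)))]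
            _ ≤ (∑ k, ‖A i k‖ ^ 2) * (∑ k, ‖B k j‖ ^ 2) :=
                Finset.sum_mul_sq_le_sq_mul_sq _ _ _
      _ = (∑ i, ∑ k, ‖A i k‖ ^ 2) * (∑ k, ∑ j, ‖B k j‖ ^ 2) := by
          rw [Finset.sum_comm (s := Finset.univ) (t := Finset.univ)
            (f := fun k j => ‖B k j‖ ^ 2)]
          rw [← Finset.sum_mul_sum]
  have h0 : 0 ≤ frobNorm A * frobNorm B :=
    mul_nonneg (frobNorm_nonneg _) (frobNorm_nonneg _)
  nlinarith [frobNorm_nonneg (A * B)]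

lemma frobNorm_blockDiagonal'_sq {C : ℕ} {Kc Nc : Fin C → ℕ}
    (Vb : ∀ c, Matrix (Fin (Nc c)) (Fin (Kc c)) ℂ) :
    frobNorm (Matrix.blockDiagonal' Vb) ^ 2 = ∑ c, frobNorm (Vb c) ^ 2 := by
  rw [frobNorm_sq]
  rw [← Finset.univ_sigma_univ, Finset.sum_sigma]
  refine Finset.sum_congr rfl fun c _ => ?_
  rw [frobNorm_sq]
  refine Finset.sum_congr rfl fun i _ => ?_
  rw [← Finset.univ_sigma_univ, Finset.sum_sigma]
  rw [Finset.sum_eq_single c]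
  · simp
  · intro c' _ hne
    refine Finset.sum_eq_zero fun j _ => ?_
    rw [Matrix.blockDiagonal'_apply_ne Vb _ _ (Ne.symm hne)]
    simp
  · simp

open scoped InnerProductSpace in
lemma key {E : Type*} [NormedAddCommGroup E] [InnerProductSpace ℂ E]
    (x x' d d' : E) {a bx bx' e bd bd' : ℝ}
    (hxx : ‖x - x'‖ ≤ a) (hx : ‖x‖ ≤ bx) (hx' : ‖x'‖ ≤ bx')
    (hdd : ‖d - d'‖ ≤ e) (hd : ‖d‖ ≤ bd) (hd' : ‖d'‖ ≤ bd') :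
    |‖x - d‖ ^ 2 - ‖x' - d'‖ ^ 2| ≤
      a * (bx + bx') + 2 * (bx * e + a * bd') + e * (bd + bd') := by
  have ha : (0:ℝ) ≤ a := le_trans (norm_nonneg _) hxx
  have he : (0:ℝ) ≤ e := le_trans (norm_nonneg _) hdd
  have hbx : (0:ℝ) ≤ bx := le_trans (norm_nonneg _) hx
  have hbd' : (0:ℝ) ≤ bd' := le_trans (norm_nonneg _) hd'
  have e1 := @norm_sub_sq ℂ E _ _ _ x d
  have e2 := @norm_sub_sq ℂ E _ _ _ x' d'
  have t1 : |‖x‖ ^ 2 - ‖x'‖ ^ 2| ≤ a * (bx + bx') := by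
    have h := abs_norm_sub_norm_le x x'
    have heq : |‖x‖ ^ 2 - ‖x'‖ ^ 2| = |‖x‖ - ‖x'‖| * (‖x‖ + ‖x'‖) := by
      rw [← abs_of_nonneg (add_nonneg (norm_nonneg x) (norm_nonneg x')), ← abs_mul]
      ring_nf
    rw [heq]
    exact mul_le_mul (h.trans hxx) (add_le_add hx hx')
      (add_nonneg (norm_nonneg _) (norm_nonneg _)) ha
  have t3 : |‖d‖ ^ 2 - ‖d'‖ ^ 2| ≤ e * (bd + bd') := by
    have h := abs_norm_sub_norm_le d d'
    have heq : |‖d‖ ^ 2 - ‖d'‖ ^ 2| = |‖d‖ - ‖d'‖| * (‖d‖ + ‖d'‖) := by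
      rw [← abs_of_nonneg (add_nonneg (norm_nonneg d) (norm_nonneg d')), ← abs_mul]
      ring_nf
    rw [heq]
    exact mul_le_mul (h.trans hdd) (add_le_add hd hd')
      (add_nonneg (norm_nonneg _) (norm_nonneg _)) he
  have t2 : |RCLike.re (⟪x, d⟫_ℂ) - RCLike.re (⟪x', d'⟫_ℂ)| ≤ bx * e + a * bd' := by
    have split : (⟪x, d⟫_ℂ) - ⟪x', d'⟫_ℂ = ⟪x, d - d'⟫_ℂ + ⟪x - x', d'⟫_ℂ := by
      rw [inner_sub_right, inner_sub_left]; ring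
    calc |RCLike.re (⟪x, d⟫_ℂ) - RCLike.re (⟪x', d'⟫_ℂ)|
        = |RCLike.re ((⟪x, d⟫_ℂ) - ⟪x', d'⟫_ℂ)| := by rw [map_sub]
      _ = |RCLike.re (⟪x, d - d'⟫_ℂ) + RCLike.re (⟪x - x', d'⟫_ℂ)| := by
          rw [split, map_add]
      _ ≤ |RCLike.re (⟪x, d - d'⟫_ℂ)| + |RCLike.re (⟪x - x', d'⟫_ℂ)| := abs_add_le _ _
      _ ≤ ‖(⟪x, d - d'⟫_ℂ)‖ + ‖(⟪x - x', d'⟫_ℂ)‖ :=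
          add_le_add (RCLike.abs_re_le_norm _) (RCLike.abs_re_le_norm _)
      _ ≤ ‖x‖ * ‖d - d'‖ + ‖x - x'‖ * ‖d'‖ :=
          add_le_add (norm_inner_le_norm _ _) (norm_inner_le_norm _ _)
      _ ≤ bx * e + a * bd' :=
          add_le_add (mul_le_mul hx hdd (norm_nonneg _) hbx)
            (mul_le_mul hxx hd' (norm_nonneg _) ha)
  rw [e1, e2]
  rw [abs_le] at t1 t2 t3 ⊢
  constructor <;> [linarith [t1.1, t2.1, t3.1, t1.2, t2.2, t3.2];
    linarith [t1.1, t2.1, t3.1, t1.2, t2.2, t3.2]]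

end Lemma9Aux

open Lemma9Aux in
/-- Lemma 9 of the paper (the multi-cell optimality-gap bound) stated
deterministically, with γ' = √(Σ_c P^c_max). -/
theorem multicell_optimality_gap_imperfect_csi {C : ℕ} (hC : 1 ≤ C)
    (U B δ ζ' η' : ℝ)
    (hU : 0 < U) (hB : 0 ≤ B) (hδ : 0 ≤ δ) (hζ : 0 ≤ ζ') (hη : 0 ≤ η')
    (Z Pmax : Fin C → ℝ) (hZ : ∀ c, 0 ≤ Z c) (hPmax : ∀ c, 0 ≤ Pmax c)
    {Kc Nc : Fin C → ℕ}
    (H' Hhat' : Matrix (Σ c, Fin (Kc c)) (Σ c, Fin (Nc c)) ℂ)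
    (D' Dhat' : Matrix (Σ c, Fin (Kc c)) (Σ c, Fin (Kc c)) ℂ)
    (Vstar Vopt : ∀ c, Matrix (Fin (Nc c)) (Fin (Kc c)) ℂ)
    (hVs : ∀ c, frobNorm (Vstar c) ^ 2 ≤ Pmax c)
    (hVo : ∀ c, frobNorm (Vopt c) ^ 2 ≤ Pmax c)
    (hH : frobNorm H' ≤ B) (hHH : frobNorm (H' - Hhat') ≤ B * δ)
    (hD : frobNorm D' ≤ ζ' * B) (hDhat : frobNorm Dhat' ≤ ζ' * B * (1 + δ))
    (hDD : frobNorm (D' - Dhat') ≤ η' * B * δ)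
    (hopt : phi' U Z Hhat' Vstar Dhat' ≤ phi' U Z Hhat' Vopt Dhat') :
    phi' U Z H' Vstar D' - phi' U Z H' Vopt D' ≤
      U * (2 * ((2 + δ) * ((Real.sqrt (∑ c, Pmax c)) ^ 2 + ζ' * η') +
        2 * (ζ' * (1 + δ) + η') * Real.sqrt (∑ c, Pmax c)) * B ^ 2 * δ) := by
  set g := Real.sqrt (∑ c, Pmax c) with hg
  have hg0 : 0 ≤ g := Real.sqrt_nonneg _
  -- frobNorm of Hhat'
  have hHhat : frobNorm Hhat' ≤ B * (1 + δ) := by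
    have : frobNorm Hhat' = ‖emb H' - emb (H' - Hhat')‖ := by
      rw [← emb_sub, ← frobNorm_eq]; congr 1; abel
    rw [this]
    calc ‖emb H' - emb (H' - Hhat')‖ ≤ ‖emb H'‖ + ‖emb (H' - Hhat')‖ :=
          norm_sub_le _ _
      _ ≤ B + B * δ := by
          rw [← frobNorm_eq, ← frobNorm_eq]; exact add_le_add hH hHH
      _ = B * (1 + δ) := by ring
  -- norm bound for block-diagonal precoders
  have hbd : ∀ (V : ∀ c, Matrix (Fin (Nc c)) (Fin (Kc c)) ℂ),
      (∀ c, frobNorm (V c) ^ 2 ≤ Pmax c) →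
      frobNorm (Matrix.blockDiagonal' V) ≤ g := by
    intro V hV
    rw [frobNorm, hg]
    apply Real.sqrt_le_sqrt
    calc (∑ i, ∑ j, ‖Matrix.blockDiagonal' V i j‖ ^ 2)
        = frobNorm (Matrix.blockDiagonal' V) ^ 2 := (frobNorm_sq _).symm
      _ = ∑ c, frobNorm (V c) ^ 2 := frobNorm_blockDiagonal'_sq V
      _ ≤ ∑ c, Pmax c := Finset.sum_le_sum fun c _ => hV c
  -- main per-precoder bound
  set K : ℝ := ((2 + δ) * (g ^ 2 + ζ' * η') + 2 * (ζ' * (1 + δ) + η') * g) * B ^ 2 * δ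
    with hK
  have main : ∀ (V : ∀ c, Matrix (Fin (Nc c)) (Fin (Kc c)) ℂ),
      (∀ c, frobNorm (V c) ^ 2 ≤ Pmax c) →
      |frobNorm (H' * Matrix.blockDiagonal' V - D') ^ 2 -
        frobNorm (Hhat' * Matrix.blockDiagonal' V - Dhat') ^ 2| ≤ K := by
    intro V hV
    have hVn : frobNorm (Matrix.blockDiagonal' V) ≤ g := hbd V hV
    set W := Matrix.blockDiagonal' V
    have hb1 : frobNorm (H' * W) ≤ B * g :=
      (frobNorm_mul_le _ _).trans
        (mul_le_mul hH hVn (frobNorm_nonneg _) hB)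
    have hb2 : frobNorm (Hhat' * W) ≤ B * (1 + δ) * g :=
      (frobNorm_mul_le _ _).trans
        (mul_le_mul hHhat hVn (frobNorm_nonneg _) (by positivity))
    have hb3 : frobNorm (H' * W - Hhat' * W) ≤ B * δ * g := by
      rw [← Matrix.sub_mul]
      exact (frobNorm_mul_le _ _).trans
        (mul_le_mul hHH hVn (frobNorm_nonneg _) (by positivity))
    have hkey := key (emb (H' * W)) (emb (Hhat' * W)) (emb D') (emb Dhat')
      (a := B * δ * g) (bx := B * g) (bx' := B * (1 + δ) * g)
      (e := η' * B * δ) (bd := ζ' * B) (bd' := ζ' * B * (1 + δ))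
      (by rw [← emb_sub, ← frobNorm_eq]; exact hb3)
      (by rw [← frobNorm_eq]; exact hb1)
      (by rw [← frobNorm_eq]; exact hb2)
      (by rw [← emb_sub, ← frobNorm_eq]; exact hDD)
      (by rw [← frobNorm_eq]; exact hD)
      (by rw [← frobNorm_eq]; exact hDhat)
    rw [← emb_sub, ← frobNorm_eq, ← emb_sub, ← frobNorm_eq] at hkey
    refine hkey.trans (le_of_eq ?_)
    rw [hK]; ring
  have hs := main Vstar hVs
  have ho := main Vopt hVo
  rw [abs_le] at hs ho
  rw [phi', phi'] at hopt ⊢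
  have htarget : U * (2 * ((2 + δ) * (g ^ 2 + ζ' * η') +
      2 * (ζ' * (1 + δ) + η') * g) * B ^ 2 * δ) = U * (2 * K) := by
    rw [hK]; ring
  rw [htarget]
  have h1 := mul_le_mul_of_nonneg_left hs.2 hU.le
  have h2 := mul_le_mul_of_nonneg_left ho.1 hU.le
  rw [mul_sub] at h1 h2
  linarith [h1, h2, hopt]
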